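/- Let N : ℝ → ℝ be a nondecreasing function. Suppose there exist R > 1 and a sequence of pairs x_k < y_k with y_k − x_k → 0 such that N(y_k) − N(x_k) ≥ R^{−k} and (log(y_k − x_k))/k → −∞. Then N is not Hölder continuous: for every γ > 0 and every δ > 0 there exist x < y with y − x < δ and N(y) − N(x) > (y − x)^γ. -/
import Mathlib


theorem not_holder_of_supergeometric_intervals
    (N : ℝ → ℝ) (hN : Monotone N) (R : ℝ) (hR : 1 < R)
    (x y : ℕ → ℝ) (hxy : ∀ k, x k < y k)
    (hlen : Filter.Tendsto (fun k => y k - x k) Filter.atTop (nhds 0))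
    (hmass : ∀ k : ℕ, R ^ (-(k : ℝ)) ≤ N (y k) - N (x k))
    (hsuper : Filter.Tendsto (fun k : ℕ => Real.log (y k - x k) / k)
      Filter.atTop Filter.atBot) :
    ∀ γ : ℝ, 0 < γ → ∀ δ : ℝ, 0 < δ →
      ∃ u v : ℝ, u < v ∧ v - u < δ ∧ (v - u) ^ γ < N v - N u := by
  intro γ hγ δ hδ
  have h1 : ∀ᶠ k : ℕ in Filter.atTop,
      Real.log (y k - x k) / k < -(Real.log R) / γ :=
    hsuper.eventually_lt_atBot _
  have h2 : ∀ᶠ k : ℕ in Filter.atTop, y k - x k < δ :=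
    hlen.eventually (gt_mem_nhds hδ)
  obtain ⟨k, ⟨hk1, hk2⟩, hk3⟩ :=
    ((h1.and h2).and (Filter.eventually_ge_atTop 1)).exists
  refine ⟨x k, y k, hxy k, hk2, ?_⟩
  have hpos : 0 < y k - x k := sub_pos.2 (hxy k)
  have hkpos : (0 : ℝ) < k := by exact_mod_cast hk3
  have h : Real.log (y k - x k) < -(k : ℝ) * Real.log R / γ := by
    have h' := (div_lt_iff₀ hkpos).1 hk1
    calc Real.log (y k - x k) < -(Real.log R) / γ * k := h'
      _ = -(k : ℝ) * Real.log R / γ := by ring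
  have h'' : Real.log (y k - x k) * γ < -(k : ℝ) * Real.log R :=
    (lt_div_iff₀ hγ).1 h
  calc (y k - x k) ^ γ = Real.exp (Real.log (y k - x k) * γ) :=
        Real.rpow_def_of_pos hpos γ
    _ < Real.exp (Real.log R * (-(k : ℝ))) := Real.exp_lt_exp.2 (by nlinarith)
    _ = R ^ (-(k : ℝ)) := (Real.rpow_def_of_pos (lt_trans one_pos hR) _).symm
    _ ≤ N (y k) - N (x k) := hmass k
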